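/- Let I be a homogeneous ideal of k[x_1,...,x_d] generated in degree n. If there exist homogeneous polynomials g_1, g_2 ∈ I of degree n that share no order types and satisfy g_1(𝟏) ≠ 0 and g_2(𝟏) ≠ 0, then I is not a principal symmetric ideal. -/

import Mathlib

open MvPolynomial

def symOrbit {k : Type*} [CommSemiring k] {d : ℕ} (f : MvPolynomial (Fin d) k) :
    Set (MvPolynomial (Fin d) k) :=
  Set.range (fun σ : Equiv.Perm (Fin d) => rename σ f)

noncomputable def psi {k : Type*} [CommSemiring k] {d : ℕ} (f : MvPolynomial (Fin d) k) :
    Ideal (MvPolynomial (Fin d) k) :=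
  Ideal.span (symOrbit f)

def orderType {d : ℕ} (s : Fin d →₀ ℕ) : Multiset ℕ :=
  Multiset.map (s : Fin d → ℕ) Finset.univ.val

def sharesOrderType {k : Type*} [CommSemiring k] {d : ℕ}
    (f g : MvPolynomial (Fin d) k) : Prop :=
  ∃ m ∈ f.support, ∃ m' ∈ g.support, orderType m = orderType m'

section Aux

variable {k : Type*} [Field k] {d : ℕ}

/-- Sum of the coefficients of monomials of a given order type. -/
noncomputable def otSum (lam : Multiset ℕ) (p : MvPolynomial (Fin d) k) : k :=
  ∑ m ∈ p.support, if orderType m = lam then coeff m p else 0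

lemma otSum_eq_sum_subset (lam : Multiset ℕ) (p : MvPolynomial (Fin d) k)
    {A : Finset (Fin d →₀ ℕ)} (hA : p.support ⊆ A) :
    otSum lam p = ∑ m ∈ A, if orderType m = lam then coeff m p else 0 := by
  refine Finset.sum_subset hA ?_
  intro x _ hx
  rw [MvPolynomial.notMem_support_iff.mp hx]
  split <;> rfl

lemma otSum_zero (lam : Multiset ℕ) : otSum lam (0 : MvPolynomial (Fin d) k) = 0 := by
  simp [otSum]

lemma otSum_add (lam : Multiset ℕ) (p q : MvPolynomial (Fin d) k) :
    otSum lam (p + q) = otSum lam p + otSum lam q := by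
  classical
  rw [otSum_eq_sum_subset lam (p + q) (MvPolynomial.support_add),
    otSum_eq_sum_subset lam p (Finset.subset_union_left (s₂ := q.support)),
    otSum_eq_sum_subset lam q (Finset.subset_union_right (s₁ := p.support)),
    ← Finset.sum_add_distrib]
  refine Finset.sum_congr rfl fun m _ => ?_
  rw [coeff_add]
  split <;> simp

lemma otSum_smul (lam : Multiset ℕ) (c : k) (p : MvPolynomial (Fin d) k) :
    otSum lam (c • p) = c * otSum lam p := by
  rw [otSum_eq_sum_subset lam (c • p) (MvPolynomial.support_smul), otSum, Finset.mul_sum]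
  refine Finset.sum_congr rfl fun m _ => ?_
  rw [MvPolynomial.coeff_smul, smul_eq_mul]
  split <;> simp

lemma orderType_mapDomain (e : Equiv.Perm (Fin d)) (s : Fin d →₀ ℕ) :
    orderType (Finsupp.mapDomain e s) = orderType s := by
  unfold orderType
  have h1 : Finset.univ.map (Equiv.toEmbedding (e : Fin d ≃ Fin d)) = Finset.univ :=
    Finset.map_univ_equiv _
  have huniv : Multiset.map (⇑e) (Finset.univ : Finset (Fin d)).val
      = (Finset.univ : Finset (Fin d)).val := by
    conv_rhs => rw [← h1]
    rw [Finset.map_val]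
    rfl
  rw [← huniv, Multiset.map_map]
  have hcomp : (⇑(Finsupp.mapDomain (⇑e) s) ∘ ⇑e) = ⇑s := by
    funext i
    exact Finsupp.mapDomain_apply e.injective s i
  rw [hcomp, huniv]

lemma otSum_rename (lam : Multiset ℕ) (e : Equiv.Perm (Fin d)) (f : MvPolynomial (Fin d) k) :
    otSum lam (rename e f) = otSum lam f := by
  classical
  unfold otSum
  rw [MvPolynomial.support_rename_of_injective e.injective,
    Finset.sum_image (fun x _ y _ h => Finsupp.mapDomain_injective e.injective h)]
  refine Finset.sum_congr rfl fun m _ => ?_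
  rw [orderType_mapDomain, MvPolynomial.coeff_rename_mapDomain _ e.injective]

lemma degree_add' (x y : Fin d →₀ ℕ) :
    Finsupp.degree (x + y) = Finsupp.degree x + Finsupp.degree y := by
  simp [Finsupp.degree_eq_weight_one, map_add]

lemma coeff_mul_homog {p : MvPolynomial (Fin d) k} {N : ℕ} (hp : p.IsHomogeneous N)
    (a : MvPolynomial (Fin d) k) {m : Fin d →₀ ℕ} (hm : m.degree ≤ N) :
    coeff m (a * p) = coeff 0 a * coeff m p := by
  rw [coeff_mul]
  refine Finset.sum_eq_single_of_mem (0, m) (Finset.HasAntidiagonal.mem_antidiagonal.mpr (zero_add m)) ?_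
  rintro ⟨x, y⟩ hxy hne
  simp only [Finset.HasAntidiagonal.mem_antidiagonal] at hxy
  by_cases hx : x = 0
  · exfalso
    apply hne
    subst hx
    rw [zero_add] at hxy
    rw [hxy]
  · have hdeg : x.degree + y.degree = m.degree := by rw [← hxy, degree_add']
    have hxpos : 0 < x.degree :=
      Nat.pos_of_ne_zero fun h => hx ((Finsupp.degree_eq_zero_iff x).mp h)
    have : y.degree ≠ N := by omega
    rw [hp.coeff_eq_zero this, mul_zero]

lemma span_degree_le {S : Set (MvPolynomial (Fin d) k)} {n : ℕ}
    (hS : ∀ p ∈ S, p.IsHomogeneous n) {g : MvPolynomial (Fin d) k}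
    (hg : g ∈ Ideal.span S) {m : Fin d →₀ ℕ} (hm : m ∈ g.support) : n ≤ m.degree := by
  classical
  refine Submodule.span_induction (p := fun g _ => ∀ m ∈ g.support, n ≤ m.degree)
    ?_ ?_ ?_ ?_ hg m hm
  · intro s hs m hm
    have := (hS s hs) (MvPolynomial.mem_support_iff.mp hm)
    rw [Finsupp.degree_eq_weight_one]
    exact this.symm.le
  · intro m hm
    simp at hm
  · intro x y _ _ hx hy m hm
    rcases Finset.mem_union.mp (MvPolynomial.support_add hm) with h | h
    · exact hx m h
    · exact hy m h
  · intro c x _ hx m hm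
    rw [smul_eq_mul] at hm
    have hsub := MvPolynomial.support_mul c x hm
    obtain ⟨a, ha, b, hb, rfl⟩ := Finset.mem_add.mp hsub
    have := hx b hb
    rw [degree_add']
    omega

lemma mem_kspan {f g : MvPolynomial (Fin d) k} {n N : ℕ}
    (hf : f.IsHomogeneous N) (hg : g.IsHomogeneous n) (hn : n ≤ N)
    (hmem : g ∈ psi f) : g ∈ Submodule.span k (symOrbit f) := by
  rw [psi, Ideal.span] at hmem
  obtain ⟨r, a, v, hsum⟩ := Submodule.mem_span_set'.mp hmem
  have hv : ∀ i, (v i : MvPolynomial (Fin d) k).IsHomogeneous N := by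
    intro i
    obtain ⟨σ, hσ⟩ := (v i).2
    rw [← hσ]
    exact hf.rename_isHomogeneous
  have hgeq : g = ∑ i, (coeff 0 (a i)) • (v i : MvPolynomial (Fin d) k) := by
    ext m
    rw [MvPolynomial.coeff_sum]
    by_cases hm : m.degree ≤ N
    · rw [← hsum, MvPolynomial.coeff_sum]
      refine Finset.sum_congr rfl fun i _ => ?_
      rw [smul_eq_mul, coeff_mul_homog (hv i) _ hm, MvPolynomial.coeff_smul, smul_eq_mul]
    · rw [hg.coeff_eq_zero (by rw [Finsupp.degree_eq_weight_one] at hm ⊢; omega)]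
      refine (Finset.sum_eq_zero fun i _ => ?_).symm
      rw [MvPolynomial.coeff_smul,
        (hv i).coeff_eq_zero (by rw [Finsupp.degree_eq_weight_one] at hm ⊢; omega), smul_zero]
  rw [hgeq]
  exact Submodule.sum_mem _ fun i _ =>
    Submodule.smul_mem _ _ (Submodule.subset_span (v i).2)

lemma exists_scalar {f g : MvPolynomial (Fin d) k}
    (hg : g ∈ Submodule.span k (symOrbit f)) :
    ∃ t : k, ∀ lam, otSum lam g = t * otSum lam f := by
  refine Submodule.span_induction ?_ ?_ ?_ ?_ hg
  · rintro x ⟨σ, rfl⟩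
    exact ⟨1, fun lam => by rw [one_mul, otSum_rename]⟩
  · exact ⟨0, fun lam => by rw [otSum_zero, zero_mul]⟩
  · rintro x y _ _ ⟨t, ht⟩ ⟨u, hu⟩
    exact ⟨t + u, fun lam => by rw [otSum_add, ht, hu, add_mul]⟩
  · rintro c x _ ⟨t, ht⟩
    exact ⟨c * t, fun lam => by rw [otSum_smul, ht, mul_assoc]⟩

lemma exists_ot {g : MvPolynomial (Fin d) k} (h : eval (fun _ => (1 : k)) g ≠ 0) :
    ∃ lam, otSum lam g ≠ 0 := by
  classical
  by_contra hc
  push_neg at hc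
  apply h
  rw [eval_eq]
  simp only [one_pow, Finset.prod_const_one, mul_one]
  rw [← Finset.sum_fiberwise_of_maps_to (g := orderType) (t := g.support.image orderType)
    (fun x hx => Finset.mem_image_of_mem _ hx)]
  refine Finset.sum_eq_zero fun lam _ => ?_
  have := hc lam
  rwa [otSum, ← Finset.sum_filter] at this

lemma ot_mem {g : MvPolynomial (Fin d) k} {lam : Multiset ℕ} (h : otSum lam g ≠ 0) :
    ∃ m ∈ g.support, orderType m = lam := by
  by_contra hc
  push_neg at hc
  exact h (Finset.sum_eq_zero fun m hm => if_neg (hc m hm))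

end Aux

theorem negative_order_type_analysis {k : Type*} [Field k] {d n : ℕ}
    (I : Ideal (MvPolynomial (Fin d) k))
    (S : Set (MvPolynomial (Fin d) k)) (hS : ∀ p ∈ S, p.IsHomogeneous n)
    (hI : I = Ideal.span S)
    (g₁ g₂ : MvPolynomial (Fin d) k)
    (hg₁I : g₁ ∈ I) (hg₂I : g₂ ∈ I)
    (hg₁hom : g₁.IsHomogeneous n) (hg₂hom : g₂.IsHomogeneous n)
    (hdisj : ¬ sharesOrderType g₁ g₂)
    (hg₁1 : eval (fun _ => (1 : k)) g₁ ≠ 0)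
    (hg₂1 : eval (fun _ => (1 : k)) g₂ ≠ 0) :
    ¬ ∃ (f : MvPolynomial (Fin d) k) (m : ℕ), f.IsHomogeneous m ∧ I = psi f := by
  rintro ⟨f, m, hfhom, hIpsi⟩
  have hg₁0 : g₁ ≠ 0 := fun h => hg₁1 (by simp [h])
  by_cases hf0 : f = 0
  · apply hg₁0
    have hmem := hg₁I
    rw [hIpsi, psi, hf0] at hmem
    have horb : symOrbit (0 : MvPolynomial (Fin d) k) = {0} := by
      ext x
      simp [symOrbit]
    rw [horb, Ideal.span_singleton_eq_bot.mpr rfl, Ideal.mem_bot] at hmem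
    exact hmem
  · have hfI : f ∈ I := by
      rw [hIpsi]
      refine Ideal.subset_span ⟨1, ?_⟩
      simp
    obtain ⟨e, he⟩ : ∃ e, e ∈ f.support :=
      Finset.nonempty_iff_ne_empty.mpr
        (fun h => hf0 (MvPolynomial.support_eq_empty.mp h))
    have hem : e.degree = m := by
      rw [Finsupp.degree_eq_weight_one]
      exact hfhom (MvPolynomial.mem_support_iff.mp he)
    have hnm : n ≤ m := hem ▸ span_degree_le hS (hI ▸ hfI) he
    have hg₁psi : g₁ ∈ psi f := hIpsi ▸ hg₁I
    have hg₂psi : g₂ ∈ psi f := hIpsi ▸ hg₂I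
    obtain ⟨t₁, ht₁⟩ := exists_scalar (mem_kspan hfhom hg₁hom hnm hg₁psi)
    obtain ⟨t₂, ht₂⟩ := exists_scalar (mem_kspan hfhom hg₂hom hnm hg₂psi)
    obtain ⟨lam₁, hlam₁⟩ := exists_ot hg₁1
    obtain ⟨lam₂, hlam₂⟩ := exists_ot hg₂1
    have ht₂0 : t₂ ≠ 0 := by
      intro h
      rw [ht₂, h, zero_mul] at hlam₂
      exact hlam₂ rfl
    have hf1 : otSum lam₁ f ≠ 0 := by
      intro h
      rw [ht₁, h, mul_zero] at hlam₁
      exact hlam₁ rfl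
    have hg₂lam₁ : otSum lam₁ g₂ ≠ 0 := by
      rw [ht₂]
      exact mul_ne_zero ht₂0 hf1
    obtain ⟨m₁, hm₁, hot₁⟩ := ot_mem hlam₁
    obtain ⟨m₂, hm₂, hot₂⟩ := ot_mem hg₂lam₁
    exact hdisj ⟨m₁, hm₁, m₂, hm₂, by rw [hot₁, hot₂]⟩
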